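/- Let G be a context-free grammar over Σ in Chomsky normal form and G' the BFG obtained by the paper's construction (productions N' → t for N → t; N' → ◇N₁'N₂'◇̄ for N → N₁N₂; N' → ◇E'X'◇̄ and N' → ◇X'E'◇̄ for each X; E' → ◇◇̄ and E' → ◇E'E'◇̄). Let π : (Σ ∪ {◇,◇̄})* → Σ* erase ◇ and ◇̄. Then π(L(G')) = L(G). -/

import Mathlib

/-- Symbols of a grammar: terminals and nonterminals. -/
inductive GSym (T N : Type*) where
  | tm (t : T) : GSym T N
  | nt (A : N) : GSym T N

/-- A grammar with terminal alphabet `T`, nonterminals `N`, a start symbol and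
a set of productions `A → α`. -/
structure Grammar (T N : Type*) where
  start : N
  rules : Set (N × List (GSym T N))

/-- One derivation step: rewrite one occurrence of a nonterminal using a rule. -/
def Grammar.Step {T N : Type*} (G : Grammar T N) (u v : List (GSym T N)) : Prop :=
  ∃ A α p q, (A, α) ∈ G.rules ∧ u = p ++ [GSym.nt A] ++ q ∧ v = p ++ α ++ q

/-- The derivation relation: reflexive-transitive closure of `Step`. -/
def Grammar.Derives {T N : Type*} (G : Grammar T N) :
    List (GSym T N) → List (GSym T N) → Prop :=
  Relation.ReflTransGen G.Step

/-- The language generated by a grammar. -/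
def Grammar.lang {T N : Type*} (G : Grammar T N) : Set (List T) :=
  {w | G.Derives [GSym.nt G.start] (w.map GSym.tm)}

/-- The grammar is in Chomsky normal form: every production is `N → t` or
`N → N₁N₂`. -/
def IsCNF {T N : Type*} (G : Grammar T N) : Prop :=
  ∀ p ∈ G.rules, (∃ t, p.2 = [GSym.tm t]) ∨ (∃ A B, p.2 = [GSym.nt A, GSym.nt B])

/-- The opening bracket `◇` as a letter of the extended alphabet `T ⊕ Bool`. -/
def od {T : Type*} : T ⊕ Bool := Sum.inr false

/-- The closing bracket `◇̄` as a letter of the extended alphabet `T ⊕ Bool`. -/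
def cd {T : Type*} : T ⊕ Bool := Sum.inr true

/-- The paper's construction of a binary flattened tree grammar `G'` from a CFG `G`
in Chomsky normal form: nonterminals are `some X = X'` for nonterminals `X` of `G`
together with `none = E'`; productions are `N' → t` for `N → t`,
`N' → ◇N₁'N₂'◇̄` for `N → N₁N₂`, `X' → ◇E'X'◇̄` and `X' → ◇X'E'◇̄` for each `X`,
and `E' → ◇◇̄`, `E' → ◇E'E'◇̄`. -/
def primed {T N : Type*} (G : Grammar T N) : Grammar (T ⊕ Bool) (Option N) where
  start := some G.start
  rules := {p |
    (∃ A t, (A, [GSym.tm t]) ∈ G.rules ∧ p = (some A, [GSym.tm (Sum.inl t)])) ∨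
    (∃ A B C, (A, [GSym.nt B, GSym.nt C]) ∈ G.rules ∧
      p = (some A, [GSym.tm od, GSym.nt (some B), GSym.nt (some C), GSym.tm cd])) ∨
    (∃ X : N, p = (some X, [GSym.tm od, GSym.nt none, GSym.nt (some X), GSym.tm cd])) ∨
    (∃ X : N, p = (some X, [GSym.tm od, GSym.nt (some X), GSym.nt none, GSym.tm cd])) ∨
    p = (none, [GSym.tm od, GSym.tm cd]) ∨
    p = (none, [GSym.tm od, GSym.nt none, GSym.nt none, GSym.tm cd])}

/-- The homomorphism erasing the bracket symbols `◇, ◇̄`. -/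
def eraseBrackets {T : Type*} : List (T ⊕ Bool) → List T :=
  List.filterMap (Sum.elim some fun _ => none)


/-- Auxiliary: an inductive "generates" predicate. -/
inductive Gen {T N : Type*} (G : Grammar T N) : List (GSym T N) → List T → Prop
  | nil : Gen G [] []
  | tm {u w} (t) : Gen G u w → Gen G (GSym.tm t :: u) (t :: w)
  | nt {A α u w1 w2} : (A, α) ∈ G.rules → Gen G α w1 → Gen G u w2 →
      Gen G (GSym.nt A :: u) (w1 ++ w2)

lemma gen_append {T N : Type*} {G : Grammar T N} {u v w1 w2}
    (h1 : Gen G u w1) (h2 : Gen G v w2) : Gen G (u ++ v) (w1 ++ w2) := by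
  induction h1 with
  | nil => simpa
  | tm t _ ih => simpa using Gen.tm t ih
  | nt hr hα _ _ ih => simpa [List.append_assoc] using Gen.nt hr hα ih

lemma gen_nil {T N : Type*} {G : Grammar T N} {w} (h : Gen G [] w) : w = [] := by
  cases h; rfl

lemma gen_split {T N : Type*} {G : Grammar T N} :
    ∀ {u v : List (GSym T N)} {w}, Gen G (u ++ v) w →
    ∃ w1 w2, w = w1 ++ w2 ∧ Gen G u w1 ∧ Gen G v w2 := by
  intro u
  induction u with
  | nil => intro v w h; exact ⟨[], w, rfl, Gen.nil, h⟩
  | cons s u ih =>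
    intro v w h
    cases h with
    | tm t h' =>
      obtain ⟨w1, w2, rfl, h1, h2⟩ := ih h'
      exact ⟨t :: w1, w2, rfl, Gen.tm t h1, h2⟩
    | nt hr hα h' =>
      obtain ⟨w1, w2, rfl, h1, h2⟩ := ih h'
      exact ⟨_ ++ w1, w2, (List.append_assoc _ _ _).symm, Gen.nt hr hα h1, h2⟩

lemma step_append_left {T N : Type*} {G : Grammar T N} (p) {u v}
    (h : G.Step u v) : G.Step (p ++ u) (p ++ v) := by
  obtain ⟨A, α, p', q, hr, rfl, rfl⟩ := h
  exact ⟨A, α, p ++ p', q, hr, by simp, by simp⟩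

lemma step_append_right {T N : Type*} {G : Grammar T N} (q) {u v}
    (h : G.Step u v) : G.Step (u ++ q) (v ++ q) := by
  obtain ⟨A, α, p', q', hr, rfl, rfl⟩ := h
  exact ⟨A, α, p', q' ++ q, hr, by simp, by simp⟩

lemma derives_append {T N : Type*} {G : Grammar T N} {u v u' v'}
    (h1 : G.Derives u u') (h2 : G.Derives v v') : G.Derives (u ++ v) (u' ++ v') := by
  have l1 : G.Derives (u ++ v) (u' ++ v) :=
    Relation.ReflTransGen.lift (· ++ v) (fun a b hab => step_append_right v hab) _ _ h1
  have l2 : G.Derives (u' ++ v) (u' ++ v') :=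
    Relation.ReflTransGen.lift (u' ++ ·) (fun a b hab => step_append_left u' hab) _ _ h2
  exact l1.trans l2

lemma gen_derives {T N : Type*} {G : Grammar T N} {u w} (h : Gen G u w) :
    G.Derives u (w.map GSym.tm) := by
  induction h with
  | nil => exact Relation.ReflTransGen.refl
  | tm t _ ih =>
    simpa using derives_append (u := [GSym.tm t]) (u' := [GSym.tm t])
      Relation.ReflTransGen.refl ih
  | nt hr _ _ ih1 ih2 =>
    rename_i A α u w1 w2 _ _
    have hstep : G.Step (GSym.nt A :: u) (α ++ u) := ⟨A, α, [], u, hr, by simp, by simp⟩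
    have hd : G.Derives (α ++ u) ((w1.map GSym.tm) ++ (w2.map GSym.tm)) :=
      derives_append ih1 ih2
    simpa [Grammar.Derives] using Relation.ReflTransGen.head hstep hd

lemma map_tm_gen {T N : Type*} {G : Grammar T N} (w : List T) :
    Gen G (w.map GSym.tm) w := by
  induction w with
  | nil => exact Gen.nil
  | cons t w ih => exact Gen.tm t ih

lemma derives_gen {T N : Type*} {G : Grammar T N} {u : List (GSym T N)} {w}
    (h : G.Derives u (w.map GSym.tm)) : Gen G u w := by
  induction h using Relation.ReflTransGen.head_induction_on with
  | refl => exact map_tm_gen w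
  | head hstep _ ih =>
    obtain ⟨A, α, p, q, hr, rfl, rfl⟩ := hstep
    obtain ⟨w12, wq, rfl, h12, hq⟩ := gen_split ih
    obtain ⟨wp, wa, rfl, hp, ha⟩ := gen_split h12
    have hA : Gen G [GSym.nt A] (wa ++ []) := Gen.nt hr ha Gen.nil
    simpa using gen_append (gen_append hp hA) hq

/-- Projection of a primed symbol back to symbols of `G`. -/
def projSym {T N : Type*} : GSym (T ⊕ Bool) (Option N) → List (GSym T N)
  | .tm (Sum.inl t) => [.tm t]
  | .tm (Sum.inr _) => []
  | .nt (some A) => [.nt A]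
  | .nt none => []

/-- Lifting a symbol of `G` to a primed symbol. -/
def liftSym {T N : Type*} : GSym T N → GSym (T ⊕ Bool) (Option N)
  | .tm t => .tm (Sum.inl t)
  | .nt A => .nt (some A)

lemma erase_cons_inl {T : Type*} (t : T) (w) :
    eraseBrackets (Sum.inl t :: w) = t :: eraseBrackets w := rfl

lemma erase_cons_inr {T : Type*} (b : Bool) (w : List (T ⊕ Bool)) :
    eraseBrackets (Sum.inr b :: w) = eraseBrackets w := rfl

lemma erase_append {T : Type*} (w1 w2 : List (T ⊕ Bool)) :
    eraseBrackets (w1 ++ w2) = eraseBrackets w1 ++ eraseBrackets w2 :=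
  List.filterMap_append

lemma gen_proj {T N : Type*} {G : Grammar T N} {u w}
    (h : Gen (primed G) u w) : Gen G (u.flatMap projSym) (eraseBrackets w) := by
  induction h with
  | nil => exact Gen.nil
  | tm s _ ih =>
    cases s with
    | inl t => simpa [projSym, erase_cons_inl] using Gen.tm t ih
    | inr b => simpa [projSym, erase_cons_inr] using ih
  | nt hr _ _ ih1 ih2 =>
    rename_i A' α' u w1 w2 _ _
    simp only [primed, Set.mem_setOf_eq] at hr
    rcases hr with ⟨A, t, hrG, hp⟩ | ⟨A, B, C, hrG, hp⟩ | ⟨X, hp⟩ | ⟨X, hp⟩ | hp | hp <;>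
      rw [Prod.mk.injEq] at hp <;> obtain ⟨rfl, rfl⟩ := hp <;>
      simp only [List.flatMap_cons, List.flatMap_nil, projSym, od, cd,
        List.append_nil, erase_append] at ih1 ⊢
    · exact Gen.nt hrG ih1 ih2
    · exact Gen.nt hrG ih1 ih2
    · simpa using gen_append (v := u.flatMap projSym) ih1 ih2
    · simpa using gen_append (v := u.flatMap projSym) ih1 ih2
    · rw [gen_nil ih1]; simpa using ih2
    · rw [gen_nil ih1]; simpa using ih2

lemma gen_lift {T N : Type*} {G : Grammar T N} (hG : IsCNF G) {u w}
    (h : Gen G u w) :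
    ∃ w', Gen (primed G) (u.map liftSym) w' ∧ eraseBrackets w' = w := by
  induction h with
  | nil => exact ⟨[], Gen.nil, rfl⟩
  | tm t _ ih =>
    obtain ⟨w', hw', he⟩ := ih
    exact ⟨Sum.inl t :: w', Gen.tm _ hw', by simp [erase_cons_inl, he]⟩
  | nt hr _ _ ih1 ih2 =>
    rename_i A α u w1 w2 _ _
    obtain ⟨w1', hw1', he1⟩ := ih1
    obtain ⟨w2', hw2', he2⟩ := ih2
    rcases hG _ hr with ⟨t, ht⟩ | ⟨B, C, hBC⟩
    · simp only at ht; subst ht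
      have hr' : (some A, [GSym.tm (Sum.inl t)]) ∈ (primed G).rules :=
        Or.inl ⟨A, t, hr, rfl⟩
      refine ⟨w1' ++ w2', ?_, by simp [erase_append, he1, he2]⟩
      simpa [liftSym] using Gen.nt hr' (by simpa [liftSym] using hw1') hw2'
    · simp only at hBC; subst hBC
      have hr' : (some A, [GSym.tm od, GSym.nt (some B), GSym.nt (some C), GSym.tm cd])
          ∈ (primed G).rules := Or.inr (Or.inl ⟨A, B, C, hr, rfl⟩)
      have hmid : Gen (primed G)
          [GSym.tm od, GSym.nt (some B), GSym.nt (some C), GSym.tm cd]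
          (od :: (w1' ++ [cd])) := by
        have h1 : Gen (primed G) ([GSym.nt (some B), GSym.nt (some C)] ++ [GSym.tm cd])
            (w1' ++ [cd]) :=
          gen_append (by simpa [liftSym] using hw1') (Gen.tm cd Gen.nil)
        simpa using Gen.tm od h1
      refine ⟨(od :: (w1' ++ [cd])) ++ w2', ?_, ?_⟩
      · simpa [liftSym] using Gen.nt hr' hmid hw2'
      · simp [erase_append, od, cd, erase_cons_inr, he1, he2]

/-- For a CFG `G` in Chomsky normal form and the BFG `G'` given by the paper's
construction, erasing the brackets from `L(G')` yields exactly `L(G)`. -/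
theorem erase_primed_lang {T N : Type*} (G : Grammar T N) (hG : IsCNF G) :
    eraseBrackets '' (primed G).lang = G.lang := by
  ext w
  constructor
  · rintro ⟨w1, hw1, rfl⟩
    have hg : Gen (primed G) [GSym.nt (some G.start)] w1 := derives_gen hw1
    have hp := gen_proj hg
    simp only [List.flatMap_cons, List.flatMap_nil, projSym, List.append_nil] at hp
    exact gen_derives hp
  · intro hw
    have hg : Gen G [GSym.nt G.start] w := derives_gen hw
    obtain ⟨w1, hw1, he⟩ := gen_lift hG hg
    refine ⟨w1, ?_, he⟩
    simpa [liftSym, Grammar.lang, primed] using gen_derives hw1
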